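/- For every 2 ≤ r ≤ n, there exists a family 𝒢 of r-uniform hypergraphs on [n] of size exactly 2^{f_r(n)} such that for every G₁, G₂ ∈ 𝒢 the hypergraphs G₁ \ G₂ and G₂ \ G₁ are isomorphic (in fact, related by a single fixed involution of [n]). -/

import Mathlib

/-- f_r(n) from the paper. -/
def fr (n r : ℕ) : ℕ :=
  if r % 2 = 1 ∧ n % 2 = 0 then n.choose r / 2
  else (n.choose r - (n / 2).choose (r / 2)) / 2

namespace Stmt8

def gv (n k : ℕ) : ℕ := if k % 2 = 1 then k - 1 else if k + 1 < n then k + 1 else k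

lemma gv_lt {n k : ℕ} (h : k < n) : gv n k < n := by unfold gv; split_ifs <;> omega

lemma gv_invol {n k : ℕ} (h : k < n) : gv n (gv n k) = k := by
  unfold gv; split_ifs <;> omega

def psi (n : ℕ) : Equiv.Perm (Fin n) :=
  Function.Involutive.toPerm (fun x => ⟨gv n x.1, gv_lt x.2⟩)
    (fun x => Fin.ext (gv_invol x.2))

lemma psi_invol (n : ℕ) : ∀ x, psi n (psi n x) = x := fun x => Fin.ext (gv_invol x.2)

lemma psi_val {n : ℕ} (x : Fin n) : (psi n x).1 = gv n x.1 := rfl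

lemma mem_image_invol {α : Type*} [DecidableEq α] {g : α → α} (hg : ∀ x, g (g x) = x)
    {s : Finset α} {x : α} : x ∈ s.image g ↔ g x ∈ s := by
  simp only [Finset.mem_image]
  constructor
  · rintro ⟨y, hy, rfl⟩; rwa [hg]
  · intro h; exact ⟨g x, h, hg x⟩

lemma imagePsi_invol (n : ℕ) : ∀ e : Finset (Fin n),
    Finset.image (psi n) (Finset.image (psi n) e) = e := by
  intro e
  rw [Finset.image_image]
  have : (psi n) ∘ (psi n) = id := funext (psi_invol n)
  rw [this, Finset.image_id]

lemma card_imagePsi {n : ℕ} (e : Finset (Fin n)) :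
    (Finset.image (psi n) e).card = e.card :=
  Finset.card_image_of_injective _ (psi n).injective

lemma fixed_iff {n : ℕ} {e : Finset (Fin n)} :
    Finset.image (psi n) e = e ↔ ∀ x ∈ e, psi n x ∈ e := by
  constructor
  · intro h x hx; rw [← h, mem_image_invol (psi_invol n), psi_invol]; exact hx
  · intro h
    apply Finset.eq_of_subset_of_card_le
    · intro x hx
      rw [Finset.mem_image] at hx
      obtain ⟨y, hy, rfl⟩ := hx
      exact h y hy
    · rw [card_imagePsi]

def pa (n : ℕ) (i : Fin (n / 2)) : Fin n := ⟨2 * i.1, by have := i.2; omega⟩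
def pb (n : ℕ) (i : Fin (n / 2)) : Fin n := ⟨2 * i.1 + 1, by have := i.2; omega⟩

def Phi (n r : ℕ) (P : Finset (Fin (n / 2))) : Finset (Fin n) :=
  (P.biUnion fun i => {pa n i, pb n i}) ∪
    (if r % 2 = 1 then Finset.univ.filter (fun x : Fin n => x.1 = n - 1) else ∅)

lemma psi_pa {n : ℕ} (i : Fin (n / 2)) : psi n (pa n i) = pb n i := by
  apply Fin.ext
  rw [psi_val]
  have := i.2
  show gv n (2 * i.1) = 2 * i.1 + 1
  unfold gv
  split_ifs <;> omega

lemma psi_pb {n : ℕ} (i : Fin (n / 2)) : psi n (pb n i) = pa n i := by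
  apply Fin.ext
  rw [psi_val]
  have := i.2
  show gv n (2 * i.1 + 1) = 2 * i.1
  unfold gv
  split_ifs <;> omega

lemma mem_biUnion_pairs {n : ℕ} {P : Finset (Fin (n / 2))} {x : Fin n} :
    x ∈ P.biUnion (fun i => {pa n i, pb n i}) ↔ ∃ i ∈ P, x = pa n i ∨ x = pb n i := by
  simp only [Finset.mem_biUnion, Finset.mem_insert, Finset.mem_singleton]

lemma card_biUnion_pairs {n : ℕ} (P : Finset (Fin (n / 2))) :
    (P.biUnion fun i => ({pa n i, pb n i} : Finset (Fin n))).card = 2 * P.card := by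
  rw [Finset.card_biUnion]
  · rw [Finset.sum_congr rfl (fun i _ => ?_), Finset.sum_const, smul_eq_mul, mul_comm]
    rw [Finset.card_insert_of_notMem, Finset.card_singleton]
    simp only [Finset.mem_singleton]
    intro h
    have := congrArg Fin.val h
    simp [pa, pb] at this
  · intro i _ j _ hij
    simp only [Finset.disjoint_left, Finset.mem_insert, Finset.mem_singleton]
    rintro x (rfl | rfl) (h | h) <;>
      · have := congrArg Fin.val h
        simp only [pa, pb] at this
        exact hij (Fin.ext (by omega))

lemma card_Phi {n r : ℕ} (hpar : r % 2 = 1 → n % 2 = 1) (P : Finset (Fin (n / 2))) :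
    (Phi n r P).card = 2 * P.card + r % 2 := by
  unfold Phi
  rcases Nat.eq_zero_or_pos n with rfl | hn
  · have : P = ∅ := Finset.eq_empty_of_forall_notMem (fun i _ => absurd i.2 (by omega))
    subst this
    simp only [Finset.biUnion_empty, Finset.empty_union, Finset.card_empty, mul_zero, zero_add]
    split_ifs with h
    · exact absurd (hpar h) (by omega)
    · simp only [Finset.card_empty]; omega
  rw [Finset.card_union_of_disjoint, card_biUnion_pairs]
  · congr 1
    split_ifs with h
    · have hn1 : n % 2 = 1 := hpar h
      rw [h]
      have : Finset.univ.filter (fun x : Fin n => x.1 = n - 1) = {⟨n - 1, by omega⟩} := by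
        ext x
        simp only [Finset.mem_filter, Finset.mem_univ, true_and, Finset.mem_singleton]
        constructor
        · intro hx; exact Fin.ext hx
        · rintro rfl; rfl
      rw [this, Finset.card_singleton]
    · simp only [Finset.card_empty]
      omega
  · split_ifs with h
    · have hn1 : n % 2 = 1 := hpar h
      simp only [Finset.disjoint_left]
      intro x hx
      rw [mem_biUnion_pairs] at hx
      obtain ⟨i, _, rfl | rfl⟩ := hx <;>
      · simp only [Finset.mem_filter, Finset.mem_univ, true_and, pa, pb]
        have := i.2
        omega
    · exact Finset.disjoint_empty_right _

lemma Phi_fixed {n r : ℕ} (hpar : r % 2 = 1 → n % 2 = 1) (P : Finset (Fin (n / 2))) :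
    Finset.image (psi n) (Phi n r P) = Phi n r P := by
  rw [fixed_iff]
  intro x hx
  unfold Phi at hx ⊢
  rw [Finset.mem_union, mem_biUnion_pairs] at hx ⊢
  rcases hx with ⟨i, hi, rfl | rfl⟩ | hx
  · exact Or.inl ⟨i, hi, Or.inr (psi_pa i)⟩
  · exact Or.inl ⟨i, hi, Or.inl (psi_pb i)⟩
  · right
    split_ifs at hx ⊢ with h
    · have hn1 : n % 2 = 1 := hpar h
      simp only [Finset.mem_filter, Finset.mem_univ, true_and] at hx ⊢
      rw [psi_val, hx, gv]
      have := x.2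
      split_ifs <;> omega
    · exact absurd hx (Finset.notMem_empty x)

lemma pa_mem_Phi_iff {n r : ℕ} {P : Finset (Fin (n / 2))} {i : Fin (n / 2)} :
    pa n i ∈ Phi n r P ↔ i ∈ P := by
  unfold Phi
  rw [Finset.mem_union, mem_biUnion_pairs]
  constructor
  · rintro (⟨j, hj, h | h⟩ | h)
    · have := congrArg Fin.val h
      simp only [pa] at this
      have : i = j := Fin.ext (by omega)
      rwa [this]
    · have := congrArg Fin.val h
      simp only [pa, pb] at this
      omega
    · split_ifs at h
      · simp only [Finset.mem_filter, Finset.mem_univ, true_and, pa] at h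
        have := i.2
        omega
      · exact absurd h (Finset.notMem_empty _)
  · intro h; exact Or.inl ⟨i, h, Or.inl rfl⟩

lemma Phi_injOn {n r : ℕ} {P Q : Finset (Fin (n / 2))} (h : Phi n r P = Phi n r Q) :
    P = Q := by
  ext i
  rw [← @pa_mem_Phi_iff n r P i, ← @pa_mem_Phi_iff n r Q i, h]

/-- Structure of fixed sets. -/
lemma fixed_structure {n r : ℕ} {e : Finset (Fin n)}
    (hfix : Finset.image (psi n) e = e) (hcard : e.card = r) :
    (r % 2 = 1 → n % 2 = 1) ∧
      e = Phi n r (Finset.univ.filter fun i : Fin (n / 2) => pa n i ∈ e) := by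
  rw [fixed_iff] at hfix
  set P := Finset.univ.filter fun i : Fin (n / 2) => pa n i ∈ e with hP
  set R := e.filter (fun x : Fin n => x.1 = n - 1 ∧ n % 2 = 1) with hR
  have hsplit : e = (P.biUnion fun i => {pa n i, pb n i}) ∪ R := by
    ext x
    rw [Finset.mem_union, mem_biUnion_pairs]
    constructor
    · intro hx
      have hxn := x.2
      rcases Nat.lt_or_ge (x.1 + 1) n with hlt | hge
      · rcases Nat.mod_two_eq_zero_or_one x.1 with he | ho
        · left
          have hi : x.1 / 2 < n / 2 := by omega
          refine ⟨⟨x.1 / 2, hi⟩, ?_, Or.inl (Fin.ext ?_)⟩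
          · rw [hP, Finset.mem_filter]
            refine ⟨Finset.mem_univ _, ?_⟩
            have : pa n ⟨x.1 / 2, hi⟩ = x := Fin.ext (by simp [pa]; omega)
            rwa [this]
          · simp [pa]; omega
        · left
          have hi : x.1 / 2 < n / 2 := by omega
          refine ⟨⟨x.1 / 2, hi⟩, ?_, Or.inr (Fin.ext ?_)⟩
          · rw [hP, Finset.mem_filter]
            refine ⟨Finset.mem_univ _, ?_⟩
            have : pa n ⟨x.1 / 2, hi⟩ = psi n x := by
              apply Fin.ext
              rw [psi_val]
              simp only [pa, gv]
              split_ifs <;> omega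
            rw [this]
            exact hfix x hx
          · simp [pb]; omega
      · rcases Nat.mod_two_eq_zero_or_one x.1 with he | ho
        · right
          rw [hR, Finset.mem_filter]
          exact ⟨hx, by omega, by omega⟩
        · left
          have hi : x.1 / 2 < n / 2 := by omega
          refine ⟨⟨x.1 / 2, hi⟩, ?_, Or.inr (Fin.ext ?_)⟩
          · rw [hP, Finset.mem_filter]
            refine ⟨Finset.mem_univ _, ?_⟩
            have : pa n ⟨x.1 / 2, hi⟩ = psi n x := by
              apply Fin.ext
              rw [psi_val]
              simp only [pa, gv]
              split_ifs <;> omega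
            rw [this]
            exact hfix x hx
          · simp [pb]; omega
    · rintro (⟨i, hi, rfl | rfl⟩ | hx)
      · rw [hP, Finset.mem_filter] at hi; exact hi.2
      · rw [hP, Finset.mem_filter] at hi
        have := hfix _ hi.2
        rwa [psi_pa] at this
      · rw [hR, Finset.mem_filter] at hx; exact hx.1
  have hdisj : Disjoint (P.biUnion fun i => ({pa n i, pb n i} : Finset (Fin n))) R := by
    simp only [Finset.disjoint_left]
    intro x hx hxR
    rw [mem_biUnion_pairs] at hx
    rw [hR, Finset.mem_filter] at hxR
    obtain ⟨i, _, rfl | rfl⟩ := hx <;>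
    · have := i.2
      simp only [pa, pb] at hxR
      omega
  have hRcard : R.card ≤ 1 := by
    rw [Finset.card_le_one]
    intro a ha b hb
    rw [hR, Finset.mem_filter] at ha hb
    exact Fin.ext (ha.2.1.trans hb.2.1.symm)
  have hcards : r = 2 * P.card + R.card := by
    rw [← hcard, hsplit, Finset.card_union_of_disjoint hdisj, card_biUnion_pairs]
  constructor
  · intro hr1
    have hR1 : R.card = 1 := by omega
    obtain ⟨y, hy⟩ := Finset.card_eq_one.mp hR1
    have : y ∈ R := hy ▸ Finset.mem_singleton_self y
    rw [hR, Finset.mem_filter] at this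
    exact this.2.2
  · rw [hsplit]
    unfold Phi
    congr 1
    split_ifs with h
    · have hR1 : R.card = 1 := by omega
      obtain ⟨y, hy⟩ := Finset.card_eq_one.mp hR1
      have hyR : y ∈ R := hy ▸ Finset.mem_singleton_self y
      rw [hR, Finset.mem_filter] at hyR
      rw [hy]
      ext x
      simp only [Finset.mem_singleton, Finset.mem_filter, Finset.mem_univ, true_and]
      constructor
      · rintro rfl; exact hyR.2.1
      · intro hx; exact Fin.ext (hx.trans hyR.2.1.symm)
    · have hR0 : R.card = 0 := by omega
      rw [Finset.card_eq_zero] at hR0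
      exact hR0

lemma card_fixed (n r : ℕ) :
    ((Finset.univ.powersetCard r : Finset (Finset (Fin n))).filter
      (fun e => Finset.image (psi n) e = e)).card
      = if r % 2 = 1 ∧ n % 2 = 0 then 0 else (n / 2).choose (r / 2) := by
  split_ifs with h
  · rw [Finset.card_eq_zero, Finset.filter_eq_empty_iff]
    intro e he hfix
    rw [Finset.mem_powersetCard_univ] at he
    have := (fixed_structure hfix he).1 h.1
    omega
  · have hpar : r % 2 = 1 → n % 2 = 1 := by
      intro hr
      rcases Nat.mod_two_eq_zero_or_one n with h0 | h1
      · exact absurd ⟨hr, h0⟩ h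
      · exact h1
    have himg : (Finset.univ.powersetCard r : Finset (Finset (Fin n))).filter
        (fun e => Finset.image (psi n) e = e)
        = (Finset.univ.powersetCard (r / 2) : Finset (Finset (Fin (n / 2)))).image (Phi n r) := by
      ext e
      simp only [Finset.mem_filter, Finset.mem_powersetCard_univ, Finset.mem_image]
      constructor
      · rintro ⟨hcard, hfix⟩
        obtain ⟨_, hstruct⟩ := fixed_structure hfix hcard
        refine ⟨_, ?_, hstruct.symm⟩
        have hc := card_Phi hpar (Finset.univ.filter fun i : Fin (n / 2) => pa n i ∈ e)
        rw [← hstruct, hcard] at hc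
        omega
      · rintro ⟨P, hP, rfl⟩
        refine ⟨?_, Phi_fixed hpar P⟩
        rw [card_Phi hpar, hP]
        omega
    rw [himg, Finset.card_image_of_injOn (fun a _ b _ h => Phi_injOn h),
      Finset.card_powersetCard, Finset.card_univ, Fintype.card_fin]

def Tset (n r : ℕ) : Finset (Finset (Fin n)) :=
  ((Finset.univ.powersetCard r).filter (fun e => Finset.image (psi n) e ≠ e)).filter
    (fun e => toColex e < toColex (Finset.image (psi n) e))

lemma Tset_card {n r : ℕ} (e : Finset (Fin n)) (he : e ∈ Tset n r) : e.card = r := by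
  unfold Tset at he
  have := (Finset.mem_filter.mp (Finset.mem_filter.mp he).1).1
  rwa [Finset.mem_powersetCard_univ] at this

lemma Tset_not_image {n r : ℕ} {e : Finset (Fin n)} (he : e ∈ Tset n r) :
    Finset.image (psi n) e ∉ Tset n r := by
  intro hc
  unfold Tset at he hc
  have h1 := (Finset.mem_filter.mp he).2
  have h2 := (Finset.mem_filter.mp hc).2
  rw [imagePsi_invol] at h2
  exact absurd (h1.trans h2) (lt_irrefl _)

lemma moved_eq_union (n r : ℕ) :
    (Finset.univ.powersetCard r : Finset (Finset (Fin n))).filter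
      (fun e => Finset.image (psi n) e ≠ e)
      = Tset n r ∪ (Tset n r).image (Finset.image (psi n)) := by
  unfold Tset
  ext e
  rw [Finset.mem_union, mem_image_invol (imagePsi_invol n)]
  constructor
  · intro he
    have hS := (Finset.mem_filter.mp he).1
    have hne : Finset.image (psi n) e ≠ e := (Finset.mem_filter.mp he).2
    have hneC : toColex e ≠ toColex (Finset.image (psi n) e) := by
      intro hc
      exact hne (toColex_inj.mp hc).symm
    rcases lt_or_gt_of_ne hneC with hlt | hgt
    · exact Or.inl (Finset.mem_filter.mpr ⟨he, hlt⟩)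
    · right
      refine Finset.mem_filter.mpr ⟨Finset.mem_filter.mpr ⟨?_, ?_⟩, ?_⟩
      · rw [Finset.mem_powersetCard_univ, card_imagePsi]
        rwa [Finset.mem_powersetCard_univ] at hS
      · rw [imagePsi_invol]
        intro hc
        exact hne hc.symm
      · rwa [imagePsi_invol]
  · rintro (he | he)
    · exact (Finset.mem_filter.mp he).1
    · have hS := (Finset.mem_filter.mp (Finset.mem_filter.mp he).1).1
      have hne := (Finset.mem_filter.mp (Finset.mem_filter.mp he).1).2
      rw [imagePsi_invol] at hne
      refine Finset.mem_filter.mpr ⟨?_, fun hc => hne hc.symm⟩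
      rw [Finset.mem_powersetCard_univ] at hS ⊢
      rw [← card_imagePsi e]
      exact hS

lemma two_mul_Tset_card (n r : ℕ) :
    n.choose r = ((Finset.univ.powersetCard r : Finset (Finset (Fin n))).filter
      (fun e => Finset.image (psi n) e = e)).card + 2 * (Tset n r).card := by
  have hpart := Finset.card_filter_add_card_filter_not
    (s := (Finset.univ.powersetCard r : Finset (Finset (Fin n))))
    (p := fun e => Finset.image (psi n) e = e)
  have hScard : (Finset.univ.powersetCard r : Finset (Finset (Fin n))).card = n.choose r := by
    rw [Finset.card_powersetCard, Finset.card_univ, Fintype.card_fin]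
  have hdisj : Disjoint (Tset n r) ((Tset n r).image (Finset.image (psi n))) := by
    rw [Finset.disjoint_left]
    intro e he hc
    rw [mem_image_invol (imagePsi_invol n)] at hc
    have := Tset_not_image hc
    rw [imagePsi_invol] at this
    exact this he
  have hMcard : ((Finset.univ.powersetCard r : Finset (Finset (Fin n))).filter
      (fun e => Finset.image (psi n) e ≠ e)).card = 2 * (Tset n r).card := by
    rw [moved_eq_union, Finset.card_union_of_disjoint hdisj,
      Finset.card_image_of_injective _ (Finset.image_injective (psi n).injective)]
    omega
  simp only [ne_eq] at hMcard hpart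
  omega

lemma Tset_card_eq_fr (n r : ℕ) (hrn : r ≤ n) : (Tset n r).card = fr n r := by
  have h2 := two_mul_Tset_card n r
  rw [card_fixed] at h2
  unfold fr
  split_ifs at h2 ⊢ with h
  · omega
  · have hle : (n / 2).choose (r / 2) + 2 * (Tset n r).card = n.choose r := h2.symm
    omega

lemma key_diff {n r : ℕ} {A B : Finset (Finset (Fin n))} (hA : A ⊆ Tset n r)
    (hB : B ⊆ Tset n r) :
    (A ∪ (Tset n r \ A).image (Finset.image (psi n)))
        \ (B ∪ (Tset n r \ B).image (Finset.image (psi n)))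
      = (A \ B) ∪ (B \ A).image (Finset.image (psi n)) := by
  ext f
  simp only [Finset.mem_sdiff, Finset.mem_union, mem_image_invol (imagePsi_invol n), not_or]
  have h1 : f ∈ Tset n r → Finset.image (psi n) f ∉ Tset n r := fun h => Tset_not_image h
  have h2 : Finset.image (psi n) f ∈ Tset n r → f ∉ Tset n r := by
    intro h
    have := Tset_not_image h
    rwa [imagePsi_invol] at this
  have hAT := @hA f
  have hBT := @hB f
  have hAT' := @hA (Finset.image (psi n) f)
  have hBT' := @hB (Finset.image (psi n) f)
  tauto

lemma inter_T {n r : ℕ} {C : Finset (Finset (Fin n))} (hC : C ⊆ Tset n r) :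
    (C ∪ (Tset n r \ C).image (Finset.image (psi n))) ∩ Tset n r = C := by
  ext f
  simp only [Finset.mem_inter, Finset.mem_union, mem_image_invol (imagePsi_invol n),
    Finset.mem_sdiff]
  constructor
  · rintro ⟨hf1 | ⟨hfT, -⟩, hfT'⟩
    · exact hf1
    · have := Tset_not_image hfT
      rw [imagePsi_invol] at this
      exact absurd hfT' this
  · intro h; exact ⟨Or.inl h, hC h⟩

end Stmt8

/-- for 2 ≤ r ≤ n there is a difference-isomorphic family of r-graphs on [n]
of size exactly 2^{f_r(n)}, all differences being witnessed by a single involution. -/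
theorem stmt_8 (n r : ℕ) (hr : 2 ≤ r) (hrn : r ≤ n) :
    ∃ 𝒢 : Finset (Finset (Finset (Fin n))),
      (∀ G ∈ 𝒢, ∀ e ∈ G, e.card = r) ∧
      𝒢.card = 2 ^ fr n r ∧
      ∃ ψ : Equiv.Perm (Fin n), (∀ x, ψ (ψ x) = x) ∧
        ∀ G₁ ∈ 𝒢, ∀ G₂ ∈ 𝒢, (G₁ \ G₂).image (Finset.image ψ) = G₂ \ G₁ := by
  classical
  refine ⟨(Stmt8.Tset n r).powerset.image
    (fun A => A ∪ (Stmt8.Tset n r \ A).image (Finset.image (Stmt8.psi n))),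
    ?_, ?_, Stmt8.psi n, Stmt8.psi_invol n, ?_⟩
  · intro G hG e he
    rw [Finset.mem_image] at hG
    obtain ⟨A, hA, rfl⟩ := hG
    rw [Finset.mem_powerset] at hA
    rw [Finset.mem_union] at he
    rcases he with he | he
    · exact Stmt8.Tset_card e (hA he)
    · rw [Finset.mem_image] at he
      obtain ⟨f, hf, rfl⟩ := he
      rw [Finset.mem_sdiff] at hf
      rw [Stmt8.card_imagePsi]
      exact Stmt8.Tset_card f hf.1
  · have hinj : Set.InjOn
        (fun A => A ∪ (Stmt8.Tset n r \ A).image (Finset.image (Stmt8.psi n)))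
        ↑(Stmt8.Tset n r).powerset := by
      intro A hA B hB hAB
      rw [Finset.mem_coe, Finset.mem_powerset] at hA hB
      have := congrArg (fun G => G ∩ Stmt8.Tset n r) hAB
      simpa only [Stmt8.inter_T hA, Stmt8.inter_T hB] using this
    rw [Finset.card_image_of_injOn hinj, Finset.card_powerset,
      Stmt8.Tset_card_eq_fr n r hrn]
  · intro G₁ hG₁ G₂ hG₂
    rw [Finset.mem_image] at hG₁ hG₂
    obtain ⟨A, hA, rfl⟩ := hG₁
    obtain ⟨B, hB, rfl⟩ := hG₂
    rw [Finset.mem_powerset] at hA hB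
    rw [Stmt8.key_diff hA hB, Stmt8.key_diff hB hA, Finset.image_union, Finset.image_image]
    have hid : (Finset.image (Stmt8.psi n)) ∘ (Finset.image (Stmt8.psi n)) = id :=
      funext (Stmt8.imagePsi_invol n)
    rw [hid, Finset.image_id, Finset.union_comm]
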